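/- Let f : R^n → R be differentiable, r : R^n → R convex, S ⊆ R^n convex, and x, x⁺ ∈ S with γ > 0. If for some z ∈ ∂r(x⁺) the inequality (∇f(x) + (1/γ)(x⁺ - x) + z)^T (y - x⁺) ≥ 0 holds for all y ∈ S, then ∇f(x)^T (x - x⁺) + r(x) - r(x⁺) ≥ (1/γ)‖x⁺ - x‖². -/

import Mathlib

theorem stmt_3 (n : ℕ) (f r : EuclideanSpace ℝ (Fin n) → ℝ)
    (S : Set (EuclideanSpace ℝ (Fin n)))
    (g z x xp : EuclideanSpace ℝ (Fin n)) (γ : ℝ)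
    (hS : Convex ℝ S) (hr : ConvexOn ℝ Set.univ r) (hγ : 0 < γ)
    (hx : x ∈ S) (hxp : xp ∈ S)
    (hgrad : HasGradientAt f g x)
    (hz : ∀ u, r xp + (inner ℝ z (u - xp) : ℝ) ≤ r u)
    (hvi : ∀ y ∈ S, 0 ≤ (inner ℝ (g + (1 / γ) • (xp - x) + z) (y - xp) : ℝ)) :
    (1 / γ) * ‖xp - x‖ ^ 2 ≤ (inner ℝ g (x - xp) : ℝ) + r x - r xp := by
  have h1 := hvi x hx
  have h2 := hz x
  rw [inner_add_left, inner_add_left, real_inner_smul_left] at h1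
  have hkey : (inner ℝ (xp - x) (x - xp) : ℝ) = -‖xp - x‖ ^ 2 := by
    rw [show x - xp = -(xp - x) by abel, inner_neg_right, real_inner_self_eq_norm_sq]
  rw [hkey] at h1
  nlinarith [h1, h2]
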